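/- Let 0 < β ≤ 1/2 and 0 ≤ α ≤ β/2, and let A = {a_1 < a_2 < ...} and B = {b_1 < b_2 < ...} be two infinite subsets of ℕ such that (1) a_i − b_i = o(a_i^{β−α}) as i → ∞; (2) A(n) − B(n) = O(n^{α}); and (3) there is a constant c > 0 with A(n) ≤ c·n^{β} and B(n) ≤ c·n^{β} for all n ∈ ℕ. Then Σ_{n ≤ x} (A(n) − B(n))^2 = o(x^{2β}) as x → ∞. -/

import Mathlib

set_option maxHeartbeats 1000000

open Filter Asymptotics

/-- The counting function `A(n) = |{a ∈ A : a ≤ n}|`. -/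
noncomputable def countFn (A : Set ℕ) (n : ℕ) : ℕ := (A ∩ Set.Iic n).ncard

open Classical in
lemma countFn_eq_count (A : Set ℕ) (n : ℕ) : countFn A n = Nat.count (· ∈ A) (n + 1) := by
  rw [countFn, Nat.count_eq_card_filter_range]
  rw [show A ∩ Set.Iic n = ↑({x ∈ Finset.range (n+1) | x ∈ A}) by
    ext k; simp [Nat.lt_succ_iff, and_comm]]
  rw [Set.ncard_coe_finset]

lemma nth_le_iff (A : Set ℕ) (hA : A.Infinite) (i n : ℕ) :
    Nat.nth (· ∈ A) i ≤ n ↔ i < countFn A n := by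
  classical
  have hinf : (setOf (· ∈ A)).Infinite := by exact hA
  rw [countFn_eq_count]
  constructor
  · exact fun h => (Nat.lt_nth_iff_count_lt hinf).mpr (Nat.lt_succ_of_le h)
  · exact fun h => Nat.lt_succ_iff.mp ((Nat.lt_nth_iff_count_lt hinf).mp h)

lemma countFn_mono (A : Set ℕ) {m n : ℕ} (h : m ≤ n) : countFn A m ≤ countFn A n := by
  apply Set.ncard_le_ncard
  · exact Set.inter_subset_inter_right _ (Set.Iic_subset_Iic.2 h)
  · exact (Set.finite_Iic n).inter_of_right _

open Classical in
lemma countFn_eq_sum (A : Set ℕ) (hA : A.Infinite) (n M : ℕ) (hM : countFn A n ≤ M) :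
    (countFn A n : ℝ) = ∑ i ∈ Finset.range M, (if Nat.nth (· ∈ A) i ≤ n then (1:ℝ) else 0) := by
  rw [Finset.sum_boole]
  congr 1
  have h1 : ∀ i, Nat.nth (· ∈ A) i ≤ n ↔ i < countFn A n := fun i => nth_le_iff A hA i n
  have : Finset.filter (fun i => Nat.nth (· ∈ A) i ≤ n) (Finset.range M)
      = Finset.range (countFn A n) := by
    ext i
    simp only [Finset.mem_filter, Finset.mem_range, h1]
    omega
  rw [this, Finset.card_range]

open Classical in
lemma col_bound (a b x : ℕ) :
    ∑ n ∈ Finset.range (x+1), |(if a ≤ n then (1:ℝ) else 0) - (if b ≤ n then 1 else 0)|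
      ≤ if min a b ≤ x then |(a:ℝ) - (b:ℝ)| else 0 := by
  have hpt : ∀ n, |(if a ≤ n then (1:ℝ) else 0) - (if b ≤ n then 1 else 0)|
      = if min a b ≤ n ∧ n < max a b then (1:ℝ) else 0 := by
    intro n
    by_cases h1 : a ≤ n <;> by_cases h2 : b ≤ n
    · rw [if_pos h1, if_pos h2, if_neg (by omega)]; norm_num
    · rw [if_pos h1, if_neg h2, if_pos (by omega)]; norm_num
    · rw [if_neg h1, if_pos h2, if_pos (by omega)]; norm_num
    · rw [if_neg h1, if_neg h2, if_neg (by omega)]; norm_num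
  simp_rw [hpt]
  by_cases hx : min a b ≤ x
  · rw [if_pos hx, Finset.sum_boole]
    have hsub : {n ∈ Finset.range (x+1) | min a b ≤ n ∧ n < max a b}
        ⊆ Finset.Ico (min a b) (max a b) := by
      intro n hn
      simp only [Finset.mem_filter, Finset.mem_range] at hn
      exact Finset.mem_Ico.2 hn.2
    calc ((Finset.filter _ (Finset.range (x+1))).card : ℝ)
        ≤ ((Finset.Ico (min a b) (max a b)).card : ℝ) := by
          exact_mod_cast Finset.card_le_card hsub
      _ = ((max a b - min a b : ℕ) : ℝ) := by rw [Nat.card_Ico]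
      _ ≤ |(a:ℝ) - (b:ℝ)| := by
          rw [Nat.cast_sub (min_le_max), Nat.cast_max, Nat.cast_min, max_sub_min_eq_abs, abs_sub_comm]
  · rw [if_neg hx]
    apply le_of_eq
    apply Finset.sum_eq_zero
    intro n hn
    rw [Finset.mem_range] at hn
    rw [if_neg (by omega)]

open Classical in
lemma sum_t_le (A B : Set ℕ) (hA : A.Infinite) (β α δ : ℝ)
    (hd0 : 0 < δ) (hd2 : δ ≤ 1/2) (hba0 : 0 ≤ β - α) (hba1 : β - α ≤ 1)
    (I : ℕ) (Hδ : ∀ i, I ≤ i →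
      |(Nat.nth (· ∈ A) i : ℝ) - (Nat.nth (· ∈ B) i : ℝ)|
        ≤ δ * (Nat.nth (· ∈ A) i : ℝ) ^ (β - α))
    (x : ℕ) (hx1 : 1 ≤ x) (M : ℕ) :
    ∑ i ∈ Finset.range M,
        (if min (Nat.nth (· ∈ A) i) (Nat.nth (· ∈ B) i) ≤ x
          then |(Nat.nth (· ∈ A) i : ℝ) - (Nat.nth (· ∈ B) i : ℝ)| else 0)
      ≤ (∑ i ∈ Finset.range I, |(Nat.nth (· ∈ A) i : ℝ) - (Nat.nth (· ∈ B) i : ℝ)|)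
        + (countFn A (2*x) : ℝ) * (2 * δ * (x:ℝ) ^ (β - α)) := by
  set a : ℕ → ℕ := Nat.nth (· ∈ A) with ha
  set b : ℕ → ℕ := Nat.nth (· ∈ B) with hb
  have hxpos : (0:ℝ) ≤ (x:ℝ) := by positivity
  have htnn : (0:ℝ) ≤ 2 * δ * (x:ℝ) ^ (β - α) := by positivity
  -- key: for i ≥ I with min ≤ x, a i ≤ 2x
  have key : ∀ i, I ≤ i → min (a i) (b i) ≤ x → a i ≤ 2*x := by
    intro i hi hmin
    rcases le_or_gt (a i) x with h | h
    · omega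
    · have hbx : b i ≤ x := by omega
      have ha1 : (1:ℝ) ≤ (a i : ℝ) := by
        have : 1 ≤ a i := by omega
        exact_mod_cast this
      have hpow : ((a i : ℝ)) ^ (β - α) ≤ (a i : ℝ) := by
        nth_rewrite 2 [← Real.rpow_one (a i : ℝ)]
        exact Real.rpow_le_rpow_of_exponent_le ha1 hba1
      have h1 : (a i : ℝ) - (b i : ℝ) ≤ |(a i : ℝ) - (b i : ℝ)| := le_abs_self _
      have h2 := Hδ i hi
      have hbxr : (b i : ℝ) ≤ (x : ℝ) := by exact_mod_cast hbx
      have : (a i : ℝ) ≤ 2 * (x:ℝ) := by nlinarith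
      exact_mod_cast this
  have hterm : ∀ i ∈ Finset.range M,
      (if min (a i) (b i) ≤ x then |(a i : ℝ) - (b i : ℝ)| else 0)
        ≤ (if i < I then |(a i : ℝ) - (b i : ℝ)| else 0)
          + (if a i ≤ 2*x then 2 * δ * (x:ℝ) ^ (β - α) else 0) := by
    intro i _
    by_cases hiI : i < I
    · rw [if_pos hiI]
      have h2 : (0:ℝ) ≤ if a i ≤ 2*x then 2 * δ * (x:ℝ) ^ (β - α) else 0 := by
        split_ifs; exacts [htnn, le_refl 0]
      by_cases h : min (a i) (b i) ≤ x
      · rw [if_pos h]; linarith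
      · rw [if_neg h]
        have := abs_nonneg ((a i : ℝ) - (b i : ℝ))
        linarith
    · rw [if_neg hiI]
      push_neg at hiI
      by_cases hmin : min (a i) (b i) ≤ x
      · rw [if_pos hmin, if_pos (key i hiI hmin), zero_add]
        have h2 := Hδ i hiI
        have hax : (a i : ℝ) ≤ 2 * (x:ℝ) := by exact_mod_cast key i hiI hmin
        have hpow : ((a i : ℝ)) ^ (β - α) ≤ (2 * (x:ℝ)) ^ (β - α) :=
          Real.rpow_le_rpow (by positivity) hax hba0
        have h2pow : (2 * (x:ℝ)) ^ (β - α) = 2 ^ (β - α) * (x:ℝ) ^ (β - α) :=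
          Real.mul_rpow (by norm_num) hxpos
        have h2le : (2:ℝ) ^ (β - α) ≤ 2 := by
          nth_rewrite 2 [← Real.rpow_one 2]
          exact Real.rpow_le_rpow_of_exponent_le one_le_two hba1
        have hxnn : (0:ℝ) ≤ (x:ℝ) ^ (β - α) := Real.rpow_nonneg hxpos _
        nlinarith
      · rw [if_neg hmin, zero_add]
        split_ifs; exacts [htnn, le_refl 0]
  calc ∑ i ∈ Finset.range M, (if min (a i) (b i) ≤ x then |(a i : ℝ) - (b i : ℝ)| else 0)
      ≤ ∑ i ∈ Finset.range M, ((if i < I then |(a i : ℝ) - (b i : ℝ)| else 0)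
          + (if a i ≤ 2*x then 2 * δ * (x:ℝ) ^ (β - α) else 0)) :=
        Finset.sum_le_sum hterm
    _ = (∑ i ∈ Finset.range M, (if i < I then |(a i : ℝ) - (b i : ℝ)| else 0))
        + ∑ i ∈ Finset.range M, (if a i ≤ 2*x then 2 * δ * (x:ℝ) ^ (β - α) else 0) :=
        Finset.sum_add_distrib
    _ ≤ _ := by
        gcongr
        · -- first part ≤ sum over range I
          rw [← Finset.sum_filter]
          apply Finset.sum_le_sum_of_subset_of_nonneg
          · intro i hi
            simp only [Finset.mem_filter, Finset.mem_range] at hi ⊢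
            exact hi.2
          · intro i _ _; positivity
        · -- second part
          rw [← Finset.sum_filter]
          have hsub : {i ∈ Finset.range M | a i ≤ 2*x} ⊆ Finset.range (countFn A (2*x)) := by
            intro i hi
            simp only [Finset.mem_filter, Finset.mem_range] at hi ⊢
            exact (nth_le_iff A hA i (2*x)).mp hi.2
          calc ∑ _i ∈ {i ∈ Finset.range M | a i ≤ 2*x}, (2 * δ * (x:ℝ) ^ (β - α))
              ≤ ∑ _i ∈ Finset.range (countFn A (2*x)), (2 * δ * (x:ℝ) ^ (β - α)) :=
                Finset.sum_le_sum_of_subset_of_nonneg hsub (fun _ _ _ => htnn)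
            _ = (countFn A (2*x) : ℝ) * (2 * δ * (x:ℝ) ^ (β - α)) := by
                rw [Finset.sum_const, Finset.card_range, nsmul_eq_mul]

open Classical in
lemma sumAbsD_le (A B : Set ℕ) (hA : A.Infinite) (hB : B.Infinite) (x : ℕ) :
    ∑ n ∈ Finset.range (x+1), |(countFn A n : ℝ) - (countFn B n : ℝ)|
      ≤ ∑ i ∈ Finset.range (countFn A x + countFn B x),
          (if min (Nat.nth (· ∈ A) i) (Nat.nth (· ∈ B) i) ≤ x
            then |(Nat.nth (· ∈ A) i : ℝ) - (Nat.nth (· ∈ B) i : ℝ)| else 0) := by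
  set M := countFn A x + countFn B x with hM
  calc ∑ n ∈ Finset.range (x+1), |(countFn A n : ℝ) - (countFn B n : ℝ)|
      ≤ ∑ n ∈ Finset.range (x+1), ∑ i ∈ Finset.range M,
          |(if Nat.nth (· ∈ A) i ≤ n then (1:ℝ) else 0)
            - (if Nat.nth (· ∈ B) i ≤ n then 1 else 0)| := by
        apply Finset.sum_le_sum
        intro n hn
        rw [Finset.mem_range, Nat.lt_succ_iff] at hn
        rw [countFn_eq_sum A hA n M ((countFn_mono A hn).trans (by omega)),
          countFn_eq_sum B hB n M ((countFn_mono B hn).trans (by omega)),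
          ← Finset.sum_sub_distrib]
        exact Finset.abs_sum_le_sum_abs _ _
    _ = ∑ i ∈ Finset.range M, ∑ n ∈ Finset.range (x+1),
          |(if Nat.nth (· ∈ A) i ≤ n then (1:ℝ) else 0)
            - (if Nat.nth (· ∈ B) i ≤ n then 1 else 0)| := Finset.sum_comm
    _ ≤ _ := Finset.sum_le_sum fun i _ => col_bound _ _ x

theorem stmt9 (β α : ℝ) (hβ0 : 0 < β) (hβ1 : β ≤ 1 / 2)
    (hα0 : 0 ≤ α) (hα1 : α ≤ β / 2)
    (A B : Set ℕ) (hA : A.Infinite) (hB : B.Infinite)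
    (h1 : (fun i : ℕ => (Nat.nth (· ∈ A) i : ℝ) - (Nat.nth (· ∈ B) i : ℝ))
      =o[atTop] fun i : ℕ => (Nat.nth (· ∈ A) i : ℝ) ^ (β - α))
    (h2 : (fun n : ℕ => (countFn A n : ℝ) - (countFn B n : ℝ))
      =O[atTop] fun n : ℕ => (n : ℝ) ^ α)
    (h3 : ∃ c : ℝ, 0 < c ∧ ∀ n : ℕ,
      (countFn A n : ℝ) ≤ c * (n : ℝ) ^ β ∧ (countFn B n : ℝ) ≤ c * (n : ℝ) ^ β) :
    (fun x : ℕ => ∑ n ∈ Finset.range (x + 1),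
        ((countFn A n : ℝ) - (countFn B n : ℝ)) ^ 2)
      =o[atTop] fun x : ℕ => (x : ℝ) ^ (2 * β) := by
  obtain ⟨c, hc0, hc⟩ := h3
  set D : ℕ → ℝ := fun n => (countFn A n : ℝ) - (countFn B n : ℝ) with hD
  -- extract big-O constant
  rw [isBigO_iff] at h2
  obtain ⟨C0, hC0⟩ := h2
  rw [eventually_atTop] at hC0
  obtain ⟨N0, hN0⟩ := hC0
  set C : ℝ := max C0 1 with hCdef
  have hC1 : (1:ℝ) ≤ C := le_max_right _ _
  have hCpos : (0:ℝ) < C := lt_of_lt_of_le one_pos hC1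
  set K2 : ℝ := ∑ n ∈ Finset.range N0, |D n| with hK2def
  have hK2nn : 0 ≤ K2 := Finset.sum_nonneg fun n _ => abs_nonneg _
  have hDb : ∀ n : ℕ, |D n| ≤ C * (n:ℝ) ^ α + K2 := by
    intro n
    have hrnn : (0:ℝ) ≤ (n:ℝ) ^ α := Real.rpow_nonneg (Nat.cast_nonneg n) α
    rcases le_or_gt N0 n with h | h
    · have := hN0 n h
      rw [Real.norm_eq_abs, Real.norm_eq_abs, abs_of_nonneg hrnn] at this
      have h2 : C0 * (n:ℝ) ^ α ≤ C * (n:ℝ) ^ α :=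
        mul_le_mul_of_nonneg_right (le_max_left _ _) hrnn
      linarith
    · have h2 : |D n| ≤ K2 :=
        Finset.single_le_sum (f := fun n => |D n|) (fun i _ => abs_nonneg _)
          (Finset.mem_range.2 h)
      nlinarith
  clear_value D C K2
  have hba0 : 0 ≤ β - α := by linarith
  have hba1 : β - α ≤ 1 := by linarith
  rw [isLittleO_iff]
  intro ε hε
  -- choose δ
  set R : ℝ := 4 * c * (C + K2) + 1 with hRdef
  have hRpos : 0 < R := by
    have h5 : 0 ≤ C + K2 := by linarith
    nlinarith
  set δ : ℝ := min (1/2) (ε / (2 * R)) with hδdef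
  have hd0 : 0 < δ := lt_min (by norm_num) (div_pos hε (by linarith))
  have hd2 : δ ≤ 1/2 := min_le_left _ _
  have hdR : δ ≤ ε / (2 * R) := min_le_right _ _
  clear_value δ R
  -- extract I from h1
  have h1' := h1.def hd0
  rw [eventually_atTop] at h1'
  obtain ⟨I, HI⟩ := h1'
  have Hδ : ∀ i, I ≤ i →
      |(Nat.nth (· ∈ A) i : ℝ) - (Nat.nth (· ∈ B) i : ℝ)|
        ≤ δ * (Nat.nth (· ∈ A) i : ℝ) ^ (β - α) := by
    intro i hi
    have := HI i hi
    rwa [Real.norm_eq_abs, Real.norm_eq_abs,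
      abs_of_nonneg (Real.rpow_nonneg (Nat.cast_nonneg _) _)] at this
  set K1 : ℝ := ∑ i ∈ Finset.range I,
      |(Nat.nth (· ∈ A) i : ℝ) - (Nat.nth (· ∈ B) i : ℝ)| with hK1def
  have hK1nn : 0 ≤ K1 := Finset.sum_nonneg fun i _ => abs_nonneg _
  clear_value K1
  set Q : ℝ := (C + K2) * K1 + 1 with hQdef
  have hQpos : 0 < Q := by nlinarith [mul_nonneg (by linarith : (0:ℝ) ≤ C + K2) hK1nn]
  clear_value Q
  -- eventual largeness
  have hev2 : ∀ᶠ x : ℕ in atTop, 2 * Q / ε ≤ ((x:ℝ)) ^ (2*β - α) := by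
    have ht : Tendsto (fun x : ℕ => ((x:ℝ)) ^ (2*β - α)) atTop atTop :=
      (tendsto_rpow_atTop (by linarith)).comp tendsto_natCast_atTop_atTop
    exact ht.eventually_ge_atTop _
  filter_upwards [eventually_ge_atTop 1, hev2] with x hx1 hx2
  have hx0 : (0:ℝ) < (x:ℝ) := by exact_mod_cast Nat.lt_of_lt_of_le Nat.zero_lt_one hx1
  have hx1' : (1:ℝ) ≤ (x:ℝ) := by exact_mod_cast hx1
  have hxa1 : (1:ℝ) ≤ (x:ℝ) ^ α := Real.one_le_rpow hx1' hα0
  have hxann : (0:ℝ) ≤ (x:ℝ) ^ α := by linarith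
  have hx2b : (0:ℝ) ≤ (x:ℝ) ^ (2*β) := Real.rpow_nonneg hx0.le _
  -- main chain
  have step1 : ∑ n ∈ Finset.range (x+1), (D n) ^ 2
      ≤ (C * (x:ℝ) ^ α + K2) * ∑ n ∈ Finset.range (x+1), |D n| := by
    rw [Finset.mul_sum]
    apply Finset.sum_le_sum
    intro n hn
    rw [Finset.mem_range, Nat.lt_succ_iff] at hn
    have hna : (n:ℝ) ^ α ≤ (x:ℝ) ^ α :=
      Real.rpow_le_rpow (Nat.cast_nonneg n) (by exact_mod_cast hn) hα0
    have h1' : (D n)^2 = |D n| * |D n| := by rw [← sq_abs]; ring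
    rw [h1']
    have hb := hDb n
    have h3' : C * (n:ℝ)^α + K2 ≤ C * (x:ℝ)^α + K2 := by nlinarith
    exact mul_le_mul_of_nonneg_right (by linarith) (abs_nonneg _)
  have step2 : ∑ n ∈ Finset.range (x+1), |D n|
      ≤ K1 + (countFn A (2*x) : ℝ) * (2 * δ * (x:ℝ) ^ (β - α)) := by
    simp only [hD, hK1def]
    exact (sumAbsD_le A B hA hB x).trans
      (sum_t_le A B hA β α δ hd0 hd2 hba0 hba1 I Hδ x hx1 _)
  have hcnt : (countFn A (2*x) : ℝ) ≤ 2 * c * (x:ℝ) ^ β := by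
    have h := (hc (2*x)).1
    have hcast : ((2*x : ℕ) : ℝ) = 2 * (x:ℝ) := by push_cast; ring
    rw [hcast] at h
    have hmul : (2 * (x:ℝ)) ^ β = 2 ^ β * (x:ℝ) ^ β :=
      Real.mul_rpow (by norm_num) hx0.le
    have h2b : (2:ℝ) ^ β ≤ 2 := by
      nth_rewrite 2 [← Real.rpow_one 2]
      exact Real.rpow_le_rpow_of_exponent_le one_le_two (by linarith)
    have hxb : (0:ℝ) ≤ (x:ℝ) ^ β := Real.rpow_nonneg hx0.le _
    calc (countFn A (2*x) : ℝ) ≤ c * (2 * (x:ℝ)) ^ β := h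
      _ = c * (2 ^ β * (x:ℝ) ^ β) := by rw [hmul]
      _ ≤ c * (2 * (x:ℝ) ^ β) :=
          mul_le_mul_of_nonneg_left (mul_le_mul_of_nonneg_right h2b hxb) hc0.le
      _ = 2 * c * (x:ℝ) ^ β := by ring
  have step3 : (countFn A (2*x) : ℝ) * (2 * δ * (x:ℝ) ^ (β - α))
      ≤ 2 * c * (x:ℝ) ^ β * (2 * δ * (x:ℝ) ^ (β - α)) := by
    exact mul_le_mul_of_nonneg_right hcnt
      (mul_nonneg (mul_nonneg (by norm_num) hd0.le) (Real.rpow_nonneg hx0.le _))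
  -- final arithmetic
  have hE : (C * (x:ℝ)^α + K2) * K1 ≤ ε/2 * (x:ℝ)^(2*β) := by
    have e1 : (C * (x:ℝ)^α + K2) * K1 ≤ Q * (x:ℝ)^α := by
      rw [hQdef]
      have h5 : K2 * K1 ≤ K2 * K1 * (x:ℝ)^α := by nlinarith [mul_nonneg hK2nn hK1nn]
      nlinarith [h5, hxann]
    have e2 : (x:ℝ)^(2*β) = (x:ℝ)^α * (x:ℝ)^(2*β - α) := by
      rw [← Real.rpow_add hx0]; congr 1; ring
    have e3 : Q * (x:ℝ)^α ≤ ε/2 * ((x:ℝ)^α * (x:ℝ)^(2*β - α)) := by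
      have h4 : ε/2 * (x:ℝ)^(2*β - α) ≥ Q := by
        have := mul_le_mul_of_nonneg_left hx2 (by linarith : (0:ℝ) ≤ ε/2)
        calc Q = ε/2 * (2*Q/ε) := by field_simp
          _ ≤ ε/2 * (x:ℝ)^(2*β-α) := this
      nlinarith [mul_nonneg (by linarith : (0:ℝ) ≤ ε/2 * (x:ℝ)^(2*β-α) - Q) hxann]
    rw [e2]; linarith
  have hF : (C * (x:ℝ)^α + K2) * (2 * c * (x:ℝ)^β * (2 * δ * (x:ℝ)^(β - α)))
      ≤ ε/2 * (x:ℝ)^(2*β) := by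
    have e2 : (x:ℝ)^α * ((x:ℝ)^β * (x:ℝ)^(β-α)) = (x:ℝ)^(2*β) := by
      rw [← Real.rpow_add hx0, ← Real.rpow_add hx0]; congr 1; ring
    have e3 : (x:ℝ)^β * (x:ℝ)^(β-α) = (x:ℝ)^(2*β-α) := by
      rw [← Real.rpow_add hx0]; congr 1; ring
    have e4 : (x:ℝ)^(2*β-α) ≤ (x:ℝ)^(2*β) :=
      Real.rpow_le_rpow_of_exponent_le hx1' (by linarith)
    have lhs_eq : (C * (x:ℝ)^α + K2) * (2 * c * (x:ℝ)^β * (2 * δ * (x:ℝ)^(β - α)))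
        = 4 * c * δ * (C * ((x:ℝ)^α * ((x:ℝ)^β * (x:ℝ)^(β-α)))
            + K2 * ((x:ℝ)^β * (x:ℝ)^(β-α))) := by ring
    rw [lhs_eq, e2, e3]
    have e5 : C * (x:ℝ)^(2*β) + K2 * (x:ℝ)^(2*β-α) ≤ (C + K2) * (x:ℝ)^(2*β) := by
      nlinarith
    have e6 : 4 * c * δ * ((C + K2) * (x:ℝ)^(2*β)) ≤ ε/2 * (x:ℝ)^(2*β) := by
      have h7 : 4 * c * (C + K2) * δ ≤ ε/2 := by
        have h8 : 4 * c * (C + K2) * δ ≤ R * δ := by rw [hRdef]; nlinarith [hd0.le]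
        have h9 : R * δ ≤ R * (ε / (2*R)) := mul_le_mul_of_nonneg_left hdR hRpos.le
        have h10 : R * (ε / (2*R)) = ε/2 := by field_simp
        linarith
      nlinarith
    have e7 : 4 * c * δ * (C * (x:ℝ)^(2*β) + K2 * (x:ℝ)^(2*β-α))
        ≤ 4 * c * δ * ((C + K2) * (x:ℝ)^(2*β)) :=
      mul_le_mul_of_nonneg_left e5 (mul_nonneg (mul_nonneg (by norm_num) hc0.le) hd0.le)
    linarith
  -- conclude
  have hSnn : 0 ≤ ∑ n ∈ Finset.range (x+1), (D n)^2 :=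
    Finset.sum_nonneg fun n _ => sq_nonneg _
  simp only [show ∀ n : ℕ, ((countFn A n : ℝ) - (countFn B n : ℝ)) = D n
    from fun n => by rw [hD]]
  rw [Real.norm_eq_abs, Real.norm_eq_abs, abs_of_nonneg hSnn, abs_of_nonneg hx2b]
  have hAbsSum_nn : 0 ≤ ∑ n ∈ Finset.range (x+1), |D n| :=
    Finset.sum_nonneg fun n _ => abs_nonneg _
  have hfac : (0:ℝ) ≤ C * (x:ℝ)^α + K2 :=
    add_nonneg (mul_nonneg hCpos.le hxann) hK2nn
  calc ∑ n ∈ Finset.range (x+1), (D n)^2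
      ≤ (C * (x:ℝ)^α + K2) * ∑ n ∈ Finset.range (x+1), |D n| := step1
    _ ≤ (C * (x:ℝ)^α + K2) * (K1 + 2 * c * (x:ℝ)^β * (2 * δ * (x:ℝ)^(β - α))) := by
        apply mul_le_mul_of_nonneg_left _ hfac
        linarith [step2, step3]
    _ = (C * (x:ℝ)^α + K2) * K1
        + (C * (x:ℝ)^α + K2) * (2 * c * (x:ℝ)^β * (2 * δ * (x:ℝ)^(β - α))) := by ring
    _ ≤ ε/2 * (x:ℝ)^(2*β) + ε/2 * (x:ℝ)^(2*β) := by linarith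
    _ = ε * (x:ℝ)^(2*β) := by ring
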